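/- If (ε, π) ∈ Z/2 ≀ S_n has εᵢ = 1 for all i, then the number of orbits of the image permutation σ on Fin n × Z/2 is congruent to n modulo 2 (even when n is even, odd when n is odd). -/

import Mathlib

open MulAction Function

/-- In a finite permutation group, orbit membership under `zpowers` is witnessed by a
natural power. -/
lemma aux_mem_orbit_nat {β : Type*} [Finite β] (f : Equiv.Perm β) {x y : β}
    (h : y ∈ MulAction.orbit (Subgroup.zpowers f) x) : ∃ m : ℕ, (f ^ m) x = y := by
  obtain ⟨⟨g, hg⟩, rfl⟩ := h
  rw [← (isOfFinOrder_of_finite f).mem_powers_iff_mem_zpowers] at hg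
  obtain ⟨m, rfl⟩ := hg
  exact ⟨m, rfl⟩

lemma aux_card_orbit {β : Type*} [Finite β] (f : Equiv.Perm β) (x : β) :
    Nat.card (MulAction.orbit (Subgroup.zpowers f) x) = Function.minimalPeriod f x := by
  rw [Nat.card_congr (MulAction.orbitZPowersEquiv f x), Nat.card_zmod]
  rfl

lemma aux_nat_card_sigma {ι : Type*} [Fintype ι] (f : ι → Type*) [∀ i, Finite (f i)] :
    Nat.card (Σ i, f i) = ∑ i, Nat.card (f i) := by
  letI : ∀ i, Fintype (f i) := fun i => Fintype.ofFinite _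
  simp only [Nat.card_eq_fintype_card]
  exact Fintype.card_sigma

theorem stmt_11 (n : ℕ) (ε : Fin n → ZMod 2) (π : Equiv.Perm (Fin n))
    (σ : Equiv.Perm (Fin n × ZMod 2))
    (hσ : ∀ p : Fin n × ZMod 2, σ p = (π p.1, p.2 + ε (π p.1)))
    (hε : ∀ i, ε i = 1) :
    Nat.card
        (MulAction.orbitRel.Quotient (Subgroup.zpowers σ) (Fin n × ZMod 2))
      ≡ n [MOD 2] := by
  classical
  -- iterate formula
  have key : ∀ (m : ℕ) (p : Fin n × ZMod 2), (σ ^ m) p = ((π ^ m) p.1, p.2 + (m : ZMod 2)) := by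
    intro m
    induction m with
    | zero => intro p; simp
    | succ m ih =>
      intro p
      have h1 : (σ ^ (m + 1)) p = (σ ^ m) (σ p) := by
        rw [pow_succ]; rfl
      have h2 : σ p = (π p.1, p.2 + 1) := by rw [hσ, hε]
      rw [h1, h2, ih]
      have h3 : (π ^ m) (π p.1) = (π ^ (m + 1)) p.1 := by
        rw [pow_succ]; rfl
      simp only [h3]
      push_cast
      ring_nf
  set Qσ := MulAction.orbitRel.Quotient (Subgroup.zpowers σ) (Fin n × ZMod 2) with hQσ
  set Qπ := MulAction.orbitRel.Quotient (Subgroup.zpowers π) (Fin n) with hQπ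
  have := Fintype.ofFinite Qσ
  have := Fintype.ofFinite Qπ
  -- the projection between quotients
  have proj_wd : ∀ p p' : Fin n × ZMod 2,
      p ∈ MulAction.orbit (Subgroup.zpowers σ) p' →
      p.1 ∈ MulAction.orbit (Subgroup.zpowers π) p'.1 := by
    intro p p' h
    obtain ⟨m, hm⟩ := aux_mem_orbit_nat σ h
    exact ⟨⟨π ^ m, Subgroup.zpow_mem _ (Subgroup.mem_zpowers π) m⟩, by
      have := congrArg Prod.fst hm
      rw [key] at this
      exact this⟩
  let Φ : Qσ → Qπ := Quotient.map' Prod.fst (fun p p' h => by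
    rw [MulAction.orbitRel_apply] at h ⊢
    exact proj_wd p p' h)
  have Φ_mk : ∀ p : Fin n × ZMod 2, Φ (Quotient.mk'' p) = Quotient.mk'' p.1 := fun p => rfl
  -- membership of points in fibers
  have orbit_eq : ∀ (p p' : Fin n × ZMod 2) (m : ℕ), (σ ^ m) p = p' →
      (Quotient.mk'' p : Qσ) = Quotient.mk'' p' := by
    intro p p' m hm
    rw [Quotient.eq'', MulAction.orbitRel_apply]
    refine ⟨⟨(σ ^ m)⁻¹, Subgroup.inv_mem _ (Subgroup.zpow_mem _ (Subgroup.mem_zpowers σ) m)⟩, ?_⟩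
    show (σ ^ m)⁻¹ p' = p
    rw [← hm]
    exact Equiv.symm_apply_apply _ _
  -- cardinality decompositions
  have hn : n = ∑ q : Qπ, Function.minimalPeriod (⇑π) q.out := by
    have e := MulAction.selfEquivSigmaOrbits (Subgroup.zpowers π) (Fin n)
    have h1 : Nat.card (Fin n)
        = ∑ q : Qπ, Nat.card (MulAction.orbit (Subgroup.zpowers π) q.out) := by
      rw [Nat.card_congr e, aux_nat_card_sigma]
    rw [Nat.card_eq_fintype_card, Fintype.card_fin] at h1
    exact h1.trans (Finset.sum_congr rfl fun q _ => aux_card_orbit π q.out)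
  have hQ : Nat.card Qσ = ∑ q : Qπ, Nat.card {x : Qσ // Φ x = q} := by
    rw [Nat.card_congr (Equiv.sigmaFiberEquiv Φ).symm, aux_nat_card_sigma]
  -- per-fiber parity
  have fiber_parity : ∀ q : Qπ,
      Nat.card {x : Qσ // Φ x = q} ≡ Function.minimalPeriod (⇑π) q.out [MOD 2] := by
    intro q
    set i := q.out with hi
    set k := Function.minimalPeriod (⇑π) i with hk
    have hπk : (π ^ k) i = i := by
      have := Function.iterate_minimalPeriod (f := ⇑π) (x := i)
      rwa [← Equiv.Perm.coe_pow] at this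
    have hout : (Quotient.mk'' i : Qπ) = q := Quotient.out_eq' q
    -- surjectivity of b ↦ ⟦(i, b)⟧ onto the fiber
    have surj : ∀ x : {x : Qσ // Φ x = q}, ∃ b : ZMod 2,
        x.1 = Quotient.mk'' (i, b) := by
      rintro ⟨x, hx⟩
      induction x using Quotient.inductionOn' with
      | h p =>
        have hp1 : (Quotient.mk'' p.1 : Qπ) = Quotient.mk'' i := by
          rw [← Φ_mk p]; rw [hx, ← hout]
        rw [Quotient.eq'', MulAction.orbitRel_apply] at hp1
        obtain ⟨m, hm⟩ := aux_mem_orbit_nat π hp1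
        refine ⟨p.2 - (m : ZMod 2), ?_⟩
        refine (orbit_eq (i, p.2 - (m : ZMod 2)) p m ?_).symm
        rw [key]
        simp only [hm]
        rw [sub_add_cancel]
    -- the fiber is nonempty
    have mem0 : ∀ b : ZMod 2, Φ (Quotient.mk'' (i, b)) = q := by
      intro b
      rw [Φ_mk]
      exact hout
    rcases Nat.even_or_odd k with hke | hko
    · -- even case : fiber ≃ ZMod 2
      have inj : ∀ b b' : ZMod 2,
          (Quotient.mk'' (i, b) : Qσ) = Quotient.mk'' (i, b') → b = b' := by
        intro b b' h
        rw [Quotient.eq'', MulAction.orbitRel_apply] at h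
        obtain ⟨m, hm⟩ := aux_mem_orbit_nat σ h
        rw [key] at hm
        have h1 : (π ^ m) i = i := congrArg Prod.fst hm
        have h2 : b' + (m : ZMod 2) = b := congrArg Prod.snd hm
        have hdvd : k ∣ m := by
          apply Function.IsPeriodicPt.minimalPeriod_dvd
          show (⇑π)^[m] i = i
          rwa [← Equiv.Perm.coe_pow]
        have h2m : (2 : ℕ) ∣ m := dvd_trans hke.two_dvd hdvd
        have hm0 : (m : ZMod 2) = 0 := (ZMod.natCast_eq_zero_iff m 2).mpr h2m
        rw [hm0, add_zero] at h2
        exact h2.symm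
      have e : ZMod 2 ≃ {x : Qσ // Φ x = q} := by
        refine Equiv.ofBijective (fun b => ⟨Quotient.mk'' (i, b), mem0 b⟩) ⟨?_, ?_⟩
        · intro b b' h
          exact inj b b' (congrArg Subtype.val h)
        · rintro x
          obtain ⟨b, hb⟩ := surj x
          exact ⟨b, Subtype.ext hb.symm⟩
      have hc : Nat.card {x : Qσ // Φ x = q} = 2 := by
        rw [← Nat.card_congr e, Nat.card_zmod]
      rw [hc]
      rw [Nat.even_iff] at hke
      show 2 % 2 = k % 2
      omega
    · -- odd case : the fiber is a singleton
      have hflip : (Quotient.mk'' (i, (0 : ZMod 2)) : Qσ) = Quotient.mk'' (i, 1) := by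
        apply orbit_eq _ _ k
        rw [key]
        simp only [hπk]
        have hk1 : (k : ZMod 2) = 1 := by
          rw [Nat.odd_iff] at hko
          rw [← ZMod.natCast_mod k 2, hko, Nat.cast_one]
        rw [hk1, zero_add]
      have hall : ∀ b b' : ZMod 2,
          (Quotient.mk'' (i, b) : Qσ) = Quotient.mk'' (i, b') := by
        have h01 : ∀ b : ZMod 2, b = 0 ∨ b = 1 := by decide
        intro b b'
        rcases h01 b with rfl | rfl <;> rcases h01 b' with rfl | rfl <;>
          first
          | rfl
          | exact hflip
          | exact hflip.symm
      have hsub : Subsingleton {x : Qσ // Φ x = q} := by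
        constructor
        rintro x y
        obtain ⟨b, hb⟩ := surj x
        obtain ⟨b', hb'⟩ := surj y
        apply Subtype.ext
        rw [hb, hb', hall b b']
      have hne : Nonempty {x : Qσ // Φ x = q} := ⟨⟨_, mem0 0⟩⟩
      have hc : Nat.card {x : Qσ // Φ x = q} = 1 :=
        Nat.card_eq_one_iff_unique.mpr ⟨hsub, hne⟩
      rw [Nat.odd_iff] at hko
      rw [hc]
      show 1 % 2 = k % 2
      omega
  -- combine
  rw [hQ]
  conv_rhs => rw [hn]
  show (∑ q : Qπ, Nat.card {x : Qσ // Φ x = q}) % 2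
      = (∑ q : Qπ, Function.minimalPeriod (⇑π) q.out) % 2
  rw [Finset.sum_nat_mod, Finset.sum_nat_mod Finset.univ 2
    (fun q : Qπ => Function.minimalPeriod (⇑π) q.out)]
  congr 1
  exact Finset.sum_congr rfl fun q _ => fiber_parity q
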